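/- The cooperative fog computing objective Σ_{i=1}^N R_i(φ), where R_i(φ) = τ^u_i + (1/Λ)·Σ_j φ_{ij}·(τ_{ij} + 1/(μ_j − Σ_k φ_{kj})) + φ_{ic}·τ^c with Λ = Σ_i λ_i, is a convex function of the matrix φ = (φ_{ij}) on the convex domain {φ ≥ 0 : Σ_k φ_{kj} < μ_j for all j, Σ_{j} φ_{ij} + φ_{ic} = λ_i for all i, φ_{ic} ≥ 0}. -/

import Mathlib

open Finset Set

lemma inv_convexOn_Ioi : ConvexOn ℝ (Set.Ioi (0:ℝ)) (fun y : ℝ => y⁻¹) := by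
  have h := (strictConvexOn_zpow (m := -1) (by decide) (by decide)).convexOn
  exact h.congr (fun x hx => by simp [zpow_neg_one])

lemma convexOn_affine {E : Type*} [AddCommGroup E] [Module ℝ E] {s : Set E}
    (hs : Convex ℝ s) (f : E → ℝ)
    (hf : ∀ x y (a b : ℝ), a + b = 1 → f (a • x + b • y) = a * f x + b * f y) :
    ConvexOn ℝ s f :=
  ⟨hs, fun x _ y _ a b _ _ hab => le_of_eq (by simp [hf x y a b hab, smul_eq_mul])⟩

lemma convexOn_inv_affine {E : Type*} [AddCommGroup E] [Module ℝ E] {s : Set E}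
    (hs : Convex ℝ s) (c : ℝ) (L : E → ℝ)
    (hL : ∀ x y (a b : ℝ), a + b = 1 → L (a • x + b • y) = a * L x + b * L y)
    (h : ∀ x ∈ s, L x < c) : ConvexOn ℝ s (fun x => (c - L x)⁻¹) := by
  refine ⟨hs, fun x hx y hy a b ha hb hab => ?_⟩
  have hu : c - L x ∈ Set.Ioi (0:ℝ) := by simpa using sub_pos.2 (h x hx)
  have hv : c - L y ∈ Set.Ioi (0:ℝ) := by simpa using sub_pos.2 (h y hy)
  have := inv_convexOn_Ioi.2 hu hv ha hb hab
  have hc : a • (c - L x) + b • (c - L y) = c - L (a • x + b • y) := by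
    rw [hL x y a b hab]; simp only [smul_eq_mul]; linear_combination c * hab
  rw [hc] at this
  simpa [smul_eq_mul] using this

lemma convexOn_finset_sum {E : Type*} [AddCommGroup E] [Module ℝ E] {s : Set E}
    (hs : Convex ℝ s) {ι : Type*} (t : Finset ι) (f : ι → E → ℝ)
    (h : ∀ i ∈ t, ConvexOn ℝ s (f i)) :
    ConvexOn ℝ s (fun x => ∑ i ∈ t, f i x) := by
  classical
  induction t using Finset.induction with
  | empty => simpa using convexOn_const 0 hs
  | insert a t' hni ih =>
    have := ((h a (Finset.mem_insert_self a t')).add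
      (ih (fun i hi => h i (Finset.mem_insert_of_mem hi))))
    exact this.congr (fun x _ => by simp [Finset.sum_insert hni])

theorem coop_fog_objective_convex (N : ℕ) (μ lam τu τc' : Fin N → ℝ)
    (τ : Fin N → Fin N → ℝ) (τc : ℝ)
    (hμ : ∀ j, 0 < μ j) (hlam : ∀ i, 0 < lam i) (hτu : ∀ i, 0 ≤ τu i)
    (hτ : ∀ i j, 0 ≤ τ i j) (hτc : 0 ≤ τc) :
    let Λ : ℝ := ∑ i, lam i
    let D : Set ((Fin N → Fin N → ℝ) × (Fin N → ℝ)) :=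
      {p | (∀ i j, 0 ≤ p.1 i j) ∧ (∀ i, 0 ≤ p.2 i) ∧
           (∀ j, ∑ k, p.1 k j < μ j) ∧ (∀ i, ∑ j, p.1 i j + p.2 i = lam i)}
    Convex ℝ D ∧
    ConvexOn ℝ D (fun p =>
      ∑ i, (τu i + (1 / Λ) * ∑ j, p.1 i j * (τ i j + 1 / (μ j - ∑ k, p.1 k j))
              + p.2 i * τc)) := by
  intro Λ D
  have hΛ : (0:ℝ) ≤ 1 / Λ := by
    apply one_div_nonneg.2
    exact Finset.sum_nonneg fun i _ => (hlam i).le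
  have hD : Convex ℝ D := by
    intro x hx y hy a b ha hb hab
    obtain ⟨hx1, hx2, hx3, hx4⟩ := hx
    obtain ⟨hy1, hy2, hy3, hy4⟩ := hy
    refine ⟨fun i j => ?_, fun i => ?_, fun j => ?_, fun i => ?_⟩
    · simp only [Prod.fst_add, Prod.smul_fst, Pi.add_apply, Pi.smul_apply, smul_eq_mul]
      exact add_nonneg (mul_nonneg ha (hx1 i j)) (mul_nonneg hb (hy1 i j))
    · simp only [Prod.snd_add, Prod.smul_snd, Pi.add_apply, Pi.smul_apply, smul_eq_mul]
      exact add_nonneg (mul_nonneg ha (hx2 i)) (mul_nonneg hb (hy2 i))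
    · have hcomb := (convex_Iio (μ j)) (hx3 j) (hy3 j) ha hb hab
      simp only [Set.mem_Iio, smul_eq_mul] at hcomb
      calc ∑ k, (a • x + b • y).1 k j
          = a * ∑ k, x.1 k j + b * ∑ k, y.1 k j := by
            simp [Prod.fst_add, Prod.smul_fst, Finset.sum_add_distrib, Finset.mul_sum]
        _ < μ j := hcomb
    · have := hx4 i
      have := hy4 i
      simp only [Prod.fst_add, Prod.smul_fst, Prod.snd_add, Prod.smul_snd, Pi.add_apply,
        Pi.smul_apply, smul_eq_mul, Finset.sum_add_distrib, ← Finset.mul_sum]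
      linear_combination a * (hx4 i) + b * (hy4 i) + (lam i) * hab
  refine ⟨hD, ?_⟩
  -- affine part
  set A : (Fin N → Fin N → ℝ) × (Fin N → ℝ) → ℝ := fun p =>
    (∑ i, τu i) - (N : ℝ) * (1 / Λ) + (1 / Λ) * (∑ i, ∑ j, p.1 i j * τ i j)
      + τc * ∑ i, p.2 i with hA_def
  have hA : ConvexOn ℝ D A := by
    apply convexOn_affine hD
    intro x y a b hab
    simp only [hA_def, Prod.fst_add, Prod.smul_fst, Prod.snd_add, Prod.smul_snd,
      Pi.add_apply, Pi.smul_apply, smul_eq_mul, add_mul, mul_assoc,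
      Finset.sum_add_distrib, ← Finset.mul_sum]
    linear_combination (-(∑ i, τu i) + (N : ℝ) * (1 / Λ)) * hab
  -- convex part
  have hB : ConvexOn ℝ D (fun p => (1 / Λ) *
      ∑ j, μ j * (μ j - ∑ k, p.1 k j)⁻¹) := by
    have hsum : ConvexOn ℝ D (fun p => ∑ j, μ j * (μ j - ∑ k, p.1 k j)⁻¹) := by
      apply convexOn_finset_sum hD Finset.univ
      intro j _
      have hg : ConvexOn ℝ D (fun p => (μ j - ∑ k, p.1 k j)⁻¹) := by
        apply convexOn_inv_affine hD (μ j) (fun p => ∑ k, p.1 k j)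
        · intro x y a b hab
          simp [Prod.fst_add, Prod.smul_fst, Finset.sum_add_distrib, Finset.mul_sum]
        · exact fun p hp => hp.2.2.1 j
      exact (hg.smul (hμ j).le).congr (fun p _ => by simp [smul_eq_mul])
    exact (hsum.smul hΛ).congr (fun p _ => by simp [smul_eq_mul])
  refine (hA.add hB).congr ?_
  intro p hp
  have hne : ∀ j, μ j - ∑ k, p.1 k j ≠ 0 := fun j => ne_of_gt (sub_pos.2 (hp.2.2.1 j))
  have key : ∑ i, ∑ j, p.1 i j * (μ j - ∑ k, p.1 k j)⁻¹
      = (∑ j, μ j * (μ j - ∑ k, p.1 k j)⁻¹) - (N : ℝ) := by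
    rw [Finset.sum_comm]
    have hj : ∀ j, (∑ i, p.1 i j * (μ j - ∑ k, p.1 k j)⁻¹)
        = μ j * (μ j - ∑ k, p.1 k j)⁻¹ - 1 := by
      intro j
      rw [← Finset.sum_mul]
      field_simp [hne j]
      ring
    simp only [hj, Finset.sum_sub_distrib, Finset.sum_const, Finset.card_univ,
      Fintype.card_fin, nsmul_eq_mul, mul_one]
  have hb : ∀ i, (1 / Λ) * ∑ j, p.1 i j * (τ i j + 1 / (μ j - ∑ k, p.1 k j))
      = (1 / Λ) * (∑ j, p.1 i j * τ i j)
        + (1 / Λ) * ∑ j, p.1 i j * (μ j - ∑ k, p.1 k j)⁻¹ := by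
    intro i
    simp only [one_div, mul_add, Finset.sum_add_distrib]
  have main : ∑ i, (τu i + (1 / Λ) * ∑ j, p.1 i j * (τ i j + 1 / (μ j - ∑ k, p.1 k j))
        + p.2 i * τc)
      = (∑ i, τu i) + (1 / Λ) * (∑ i, ∑ j, p.1 i j * τ i j)
        + (1 / Λ) * (∑ i, ∑ j, p.1 i j * (μ j - ∑ k, p.1 k j)⁻¹)
        + τc * ∑ i, p.2 i := by
    simp only [Finset.sum_add_distrib, hb, ← Finset.mul_sum, ← Finset.sum_mul]
    ring
  simp only []
  rw [main, key]
  simp only [Pi.add_apply, hA_def]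
  ring
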